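/- In the free associative ℚ-algebra, define Φ(t) = log σ(t) where σ(t) = 1 + ∑_{n≥1} S_n t^n and ψ(t) = σ(t)^{-1}σ'(t). Then ψ(t) = ∑_{n≥0} ((-1)^n/(n+1)!) (ad Φ(t))^n (Φ'(t)), i.e., ψ = {(1-e^{-Φ})/Φ, Φ'} where ad a (b) = ab - ba and the bracket expression denotes the formal series in ad Φ applied to Φ'. -/

import Mathlib

set_option linter.unusedSectionVars false

open PowerSeries Finset

variable {A : Type*} [Ring A] [Algebra ℚ A]

/-- Formal derivative of a power series (with possibly noncommutative
coefficients). -/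
noncomputable def fDeriv (F : PowerSeries A) : PowerSeries A :=
  PowerSeries.mk fun n => ((n : ℚ) + 1) • coeff (n + 1) F

/-- Formal logarithm `log(1 + F)` for `F` with zero constant term. -/
noncomputable def fLog (F : PowerSeries A) : PowerSeries A :=
  PowerSeries.mk fun n =>
    ∑ k ∈ Finset.range (n + 1), ((-1 : ℚ) ^ (k + 1) / k) • coeff n (F ^ k)

/-- Iterated adjoint action `(ad Φ)ⁿ (G)`, where `(ad Φ)(G) = ΦG - GΦ`. -/
noncomputable def adPow (Φ G : PowerSeries A) : ℕ → PowerSeries A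
  | 0 => G
  | n + 1 => Φ * adPow Φ G n - adPow Φ G n * Φ

/-- Truncated sum of a family of power series: degree-`m` coefficient sums the
first `m+1` members. -/
noncomputable def pSum (f : ℕ → PowerSeries A) : PowerSeries A :=
  PowerSeries.mk fun m => ∑ k ∈ Finset.range (m + 1), coeff m (f k)

/-- A family is ordered if its `k`-th member has order at least `k`. -/
def IsOrd (f : ℕ → PowerSeries A) : Prop := ∀ k m, m < k → coeff m (f k) = 0

lemma coeff_pSum (f : ℕ → PowerSeries A) (m : ℕ) :
    coeff m (pSum f) = ∑ k ∈ Finset.range (m + 1), coeff m (f k) :=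
  coeff_mk _ _

lemma coeff_pSum_of_lt {f : ℕ → PowerSeries A} (hf : IsOrd f) {m N : ℕ} (h : m < N) :
    coeff m (pSum f) = ∑ k ∈ Finset.range N, coeff m (f k) := by
  rw [coeff_pSum]
  apply Finset.sum_subset
  · intro x hx
    rw [Finset.mem_range] at *
    omega
  · intro k _ hk
    rw [Finset.mem_range, not_lt] at hk
    exact hf k m (by omega)

lemma pSum_congr {f g : ℕ → PowerSeries A} (h : ∀ k, f k = g k) : pSum f = pSum g := by
  simp only [pSum, h]

lemma coeff_mul_eq_zero {P Q : PowerSeries A} {k l m : ℕ}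
    (hP : ∀ i, i < k → coeff i P = 0) (hQ : ∀ j, j < l → coeff j Q = 0)
    (h : m < k + l) : coeff m (P * Q) = 0 := by
  rw [coeff_mul]
  apply Finset.sum_eq_zero
  rintro ⟨i, j⟩ hij
  rw [Finset.HasAntidiagonal.mem_antidiagonal] at hij
  by_cases hi : i < k
  · rw [hP i hi, zero_mul]
  · rw [hQ j (by omega), mul_zero]

lemma coeff_pow_eq_zero {F : PowerSeries A} (hF : constantCoeff F = 0) :
    ∀ k m, m < k → coeff m (F ^ k) = 0 := by
  intro k
  induction k with
  | zero => intro m hm; omega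
  | succ k ih =>
    intro m hm
    rw [pow_succ]
    refine coeff_mul_eq_zero (k := k) (l := 1) ih (fun j hj => ?_) (by omega)
    have : j = 0 := by omega
    subst this
    rwa [coeff_zero_eq_constantCoeff]

lemma coeff_pow_mul_mul_pow_eq_zero {F G : PowerSeries A} (hF : constantCoeff F = 0)
    {p q m : ℕ} (h : m < p + q) : coeff m (F ^ p * G * F ^ q) = 0 := by
  refine coeff_mul_eq_zero (k := p) (l := q) ?_ (coeff_pow_eq_zero hF q) h
  intro i hi
  exact coeff_mul_eq_zero (k := p) (l := 0) (coeff_pow_eq_zero hF p) (by omega) (by omega)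

/-- Triangle reindexing. -/
lemma tri {M : Type*} [AddCommMonoid M] (h : ℕ → ℕ → M) :
    ∀ N, ∑ n ∈ Finset.range N, ∑ p ∈ Finset.range (n + 1), h p (n - p)
      = ∑ k ∈ Finset.range N, ∑ l ∈ Finset.range (N - k), h k l := by
  intro N
  induction N with
  | zero => simp
  | succ N ih =>
    rw [Finset.sum_range_succ, ih, Finset.sum_range_succ (f := fun k => ∑ l ∈ Finset.range (N + 1 - k), h k l)]
    have h1 : ∀ k ∈ Finset.range N, ∑ l ∈ Finset.range (N + 1 - k), h k l
        = ∑ l ∈ Finset.range (N - k), h k l + h k (N - k) := by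
      intro k hk
      rw [Finset.mem_range] at hk
      have : N + 1 - k = (N - k) + 1 := by omega
      rw [this, Finset.sum_range_succ]
    rw [Finset.sum_congr rfl h1, Finset.sum_add_distrib]
    have : N + 1 - N = 1 := by omega
    rw [this]
    simp only [Finset.sum_range_one]
    rw [Finset.sum_range_succ (f := fun p => h p (N - p))]
    simp [Nat.sub_self]
    abel

lemma pSum_mul_pSum {f g : ℕ → PowerSeries A} (hf : IsOrd f) (hg : IsOrd g) :
    pSum f * pSum g = pSum (fun n => ∑ p ∈ Finset.range (n + 1), f p * g (n - p)) := by
  ext m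
  rw [coeff_mul]
  have lhs : ∑ ij ∈ Finset.HasAntidiagonal.antidiagonal m, coeff ij.1 (pSum f) * coeff ij.2 (pSum g)
      = ∑ k ∈ Finset.range (m + 1), ∑ l ∈ Finset.range (m + 1),
          coeff m (f k * g l) := by
    have : ∀ ij ∈ Finset.HasAntidiagonal.antidiagonal m,
        coeff ij.1 (pSum f) * coeff ij.2 (pSum g)
          = ∑ k ∈ Finset.range (m + 1), ∑ l ∈ Finset.range (m + 1),
              coeff ij.1 (f k) * coeff ij.2 (g l) := by
      rintro ⟨i, j⟩ hij
      rw [Finset.HasAntidiagonal.mem_antidiagonal] at hij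
      rw [coeff_pSum_of_lt hf (by omega : i < m + 1),
        coeff_pSum_of_lt hg (by omega : j < m + 1), Finset.sum_mul_sum]
    rw [Finset.sum_congr rfl this, Finset.sum_comm]
    refine Finset.sum_congr rfl fun k _ => ?_
    rw [Finset.sum_comm]
    refine Finset.sum_congr rfl fun l _ => ?_
    rw [coeff_mul]
  rw [lhs, coeff_pSum]
  have rhs : ∑ n ∈ Finset.range (m + 1),
      coeff m (∑ p ∈ Finset.range (n + 1), f p * g (n - p))
      = ∑ k ∈ Finset.range (m + 1), ∑ l ∈ Finset.range (m + 1 - k),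
          coeff m (f k * g l) := by
    rw [← tri (fun p l => coeff m (f p * g l)) (m + 1)]
    exact Finset.sum_congr rfl fun n _ => by rw [map_sum]
  rw [rhs]
  refine Finset.sum_congr rfl fun k hk => ?_
  rw [Finset.mem_range] at hk
  symm
  apply Finset.sum_subset
  · intro x hx; rw [Finset.mem_range] at *; omega
  · intro l hl hl2
    rw [Finset.mem_range] at hl hl2
    exact coeff_mul_eq_zero (fun i hi => hf k i hi) (fun j hj => hg l j hj) (by omega)

lemma mul_pSum (G : PowerSeries A) {f : ℕ → PowerSeries A} (hf : IsOrd f) :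
    G * pSum f = pSum (fun k => G * f k) := by
  ext m
  rw [coeff_mul, coeff_pSum]
  have : ∀ ij ∈ Finset.HasAntidiagonal.antidiagonal m,
      coeff ij.1 G * coeff ij.2 (pSum f)
        = ∑ k ∈ Finset.range (m + 1), coeff ij.1 G * coeff ij.2 (f k) := by
    rintro ⟨i, j⟩ hij
    rw [Finset.HasAntidiagonal.mem_antidiagonal] at hij
    rw [coeff_pSum_of_lt hf (by omega : j < m + 1), Finset.mul_sum]
  rw [Finset.sum_congr rfl this, Finset.sum_comm]
  exact Finset.sum_congr rfl fun k _ => by rw [coeff_mul]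

lemma coeff_fDeriv (F : PowerSeries A) (n : ℕ) :
    coeff n (fDeriv F) = ((n : ℚ) + 1) • coeff (n + 1) F := coeff_mk _ _

lemma fDeriv_mul (F G : PowerSeries A) :
    fDeriv (F * G) = fDeriv F * G + F * fDeriv G := by
  ext n
  rw [coeff_fDeriv, map_add, coeff_mul, coeff_mul, coeff_mul,
    Finset.Nat.sum_antidiagonal_eq_sum_range_succ_mk,
    Finset.Nat.sum_antidiagonal_eq_sum_range_succ_mk,
    Finset.Nat.sum_antidiagonal_eq_sum_range_succ_mk]
  set a : ℕ → A := fun i => coeff i F with ha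
  set b : ℕ → A := fun i => coeff i G with hb
  have h1 : ∑ i ∈ Finset.range (n + 1), coeff i (fDeriv F) * b (n - i)
      = ∑ i ∈ Finset.range (n + 2), (i : ℚ) • (a i * b (n + 1 - i)) := by
    rw [Finset.sum_range_succ' (fun i => (i : ℚ) • (a i * b (n + 1 - i))) (n + 1)]
    simp only [Nat.cast_zero, zero_smul, add_zero]
    refine Finset.sum_congr rfl fun i hi => ?_
    rw [Finset.mem_range] at hi
    have e : n + 1 - (i + 1) = n - i := by omega
    rw [coeff_fDeriv, smul_mul_assoc, e]
    push_cast
    rfl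
  have h2 : ∑ i ∈ Finset.range (n + 1), a i * coeff (n - i) (fDeriv G)
      = ∑ i ∈ Finset.range (n + 2), ((n + 1 - i : ℕ) : ℚ) • (a i * b (n + 1 - i)) := by
    rw [Finset.sum_range_succ (fun i => ((n + 1 - i : ℕ) : ℚ) • (a i * b (n + 1 - i))) (n + 1)]
    simp only [Nat.sub_self, Nat.cast_zero, zero_smul, add_zero]
    refine Finset.sum_congr rfl fun i hi => ?_
    rw [Finset.mem_range] at hi
    have e : n + 1 - i = n - i + 1 := by omega
    rw [coeff_fDeriv, mul_smul_comm, e]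
    push_cast
    rfl
  rw [h1, h2, ← Finset.sum_add_distrib, Finset.smul_sum]
  refine Finset.sum_congr rfl fun i hi => ?_
  rw [Finset.mem_range] at hi
  rw [← add_smul]
  congr 1
  have : ((n + 1 - i : ℕ) : ℚ) = (n : ℚ) + 1 - i := by
    rw [Nat.cast_sub (by omega)]; push_cast; ring
  rw [this]; ring

lemma fDeriv_pow_succ (F : PowerSeries A) :
    ∀ k, fDeriv (F ^ (k + 1))
      = ∑ i ∈ Finset.range (k + 1), F ^ i * fDeriv F * F ^ (k - i) := by
  intro k
  induction k with
  | zero => simp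
  | succ k ih =>
    have : F ^ (k + 2) = F * F ^ (k + 1) := (pow_succ' F (k + 1))
    rw [this, fDeriv_mul, ih, Finset.mul_sum,
      Finset.sum_range_succ' (fun i => F ^ i * fDeriv F * F ^ (k + 1 - i)) (k + 1)]
    simp only [pow_zero, one_mul, Nat.sub_zero, Nat.sub_self]
    rw [add_comm]
    congr 1
    refine Finset.sum_congr rfl fun i hi => ?_
    rw [Finset.mem_range] at hi
    have h1 : k + 1 - (i + 1) = k - i := by omega
    rw [h1, pow_succ' F i]
    simp [mul_assoc]

/-- Formal exponential of a series (meaningful when the constant term is 0). -/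
noncomputable def ExpS (Φ : PowerSeries A) : PowerSeries A :=
  pSum fun k => ((k.factorial : ℚ))⁻¹ • Φ ^ k

lemma isOrd_smul_pow {Φ : PowerSeries A} (hΦ : constantCoeff Φ = 0) (c : ℕ → ℚ) :
    IsOrd (fun k => c k • Φ ^ k) := by
  intro k m hm
  rw [coeff_smul, coeff_pow_eq_zero hΦ k m hm, smul_zero]

lemma fDeriv_ExpS (Φ : PowerSeries A) :
    fDeriv (ExpS Φ) = pSum fun k => (((k + 1).factorial : ℚ))⁻¹ • fDeriv (Φ ^ (k + 1)) := by
  ext m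
  rw [coeff_fDeriv, ExpS, coeff_pSum, coeff_pSum,
    Finset.sum_range_succ' (fun k => coeff (m + 1) (((k.factorial : ℚ))⁻¹ • Φ ^ k)) (m + 1)]
  simp only [Nat.factorial_zero, Nat.cast_one, inv_one, one_smul, pow_zero,
    coeff_one, Nat.add_eq_zero, one_ne_zero, and_false, if_false, add_zero]
  rw [Finset.smul_sum]
  refine Finset.sum_congr rfl fun k _ => ?_
  rw [coeff_smul, coeff_smul, coeff_fDeriv, smul_comm]

/-- Evaluation of a rational power series at a noncommutative series `F` with
zero constant term. -/
noncomputable def pEval (F : PowerSeries A) (φ : PowerSeries ℚ) : PowerSeries A :=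
  pSum fun k => (coeff k φ) • F ^ k

lemma coeff_pEval (F : PowerSeries A) (φ : PowerSeries ℚ) (m : ℕ) :
    coeff m (pEval F φ) = ∑ k ∈ Finset.range (m + 1), (coeff k φ) • coeff m (F ^ k) := by
  rw [pEval, coeff_pSum]
  exact Finset.sum_congr rfl fun k _ => coeff_smul _ _ _

lemma pEval_one {F : PowerSeries A} (hF : constantCoeff F = 0) : pEval F 1 = 1 := by
  ext m
  rw [coeff_pEval]
  rw [Finset.sum_eq_single_of_mem 0 (Finset.mem_range.2 (by omega))]
  · simp
  · intro k _ hk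
    rw [coeff_one, if_neg hk, zero_smul]

lemma pEval_add (F : PowerSeries A) (φ ψ : PowerSeries ℚ) :
    pEval F (φ + ψ) = pEval F φ + pEval F ψ := by
  ext m
  simp only [coeff_pEval, map_add, add_smul, Finset.sum_add_distrib]

lemma pEval_neg (F : PowerSeries A) (φ : PowerSeries ℚ) :
    pEval F (-φ) = -pEval F φ := by
  ext m
  simp only [coeff_pEval, map_neg, neg_smul, Finset.sum_neg_distrib]

lemma pEval_smul (F : PowerSeries A) (q : ℚ) (φ : PowerSeries ℚ) :
    pEval F (q • φ) = q • pEval F φ := by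
  ext m
  simp only [coeff_pEval, coeff_smul, smul_eq_mul, mul_smul, Finset.smul_sum]

lemma pEval_X {F : PowerSeries A} (hF : constantCoeff F = 0) : pEval F X = F := by
  ext m
  rw [coeff_pEval]
  cases m with
  | zero =>
    rw [Finset.range_one, Finset.sum_singleton, coeff_zero_X, zero_smul,
      coeff_zero_eq_constantCoeff, hF]
  | succ m =>
    rw [Finset.sum_eq_single_of_mem 1 (Finset.mem_range.2 (by omega))]
    · simp
    · intro k _ hk
      rw [coeff_X, if_neg hk, zero_smul]

lemma pEval_mul {F : PowerSeries A} (hF : constantCoeff F = 0) (φ ψ : PowerSeries ℚ) :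
    pEval F (φ * ψ) = pEval F φ * pEval F ψ := by
  rw [pEval, pEval, pEval,
    pSum_mul_pSum (isOrd_smul_pow hF _) (isOrd_smul_pow hF _)]
  apply pSum_congr
  intro n
  have : ∀ p ∈ Finset.range (n + 1),
      (coeff p φ • F ^ p) * (coeff (n - p) ψ • F ^ (n - p))
        = (coeff p φ * coeff (n - p) ψ) • F ^ n := by
    intro p hp
    rw [Finset.mem_range] at hp
    rw [smul_mul_smul_comm, ← pow_add]
    congr 2
    omega
  rw [Finset.sum_congr rfl this, ← Finset.sum_smul, coeff_mul,
    Finset.Nat.sum_antidiagonal_eq_sum_range_succ_mk]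

lemma pEval_pow {F : PowerSeries A} (hF : constantCoeff F = 0) (φ : PowerSeries ℚ) :
    ∀ k, pEval F (φ ^ k) = (pEval F φ) ^ k := by
  intro k
  induction k with
  | zero => rw [pow_zero, pow_zero, pEval_one hF]
  | succ k ih => rw [pow_succ, pow_succ, pEval_mul hF, ih]

lemma pEval_pSum {F : PowerSeries A} (hF : constantCoeff F = 0)
    {ψ : ℕ → PowerSeries ℚ} (hψ : IsOrd ψ) :
    pEval F (pSum ψ) = pSum fun k => pEval F (ψ k) := by
  ext m
  rw [coeff_pEval, coeff_pSum]
  have : ∀ k ∈ Finset.range (m + 1),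
      (coeff k (pSum ψ)) • coeff m (F ^ k)
        = ∑ l ∈ Finset.range (m + 1), (coeff k (ψ l)) • coeff m (F ^ k) := by
    intro k hk
    rw [Finset.mem_range] at hk
    rw [coeff_pSum_of_lt hψ (by omega : k < m + 1), Finset.sum_smul]
  rw [Finset.sum_congr rfl this, Finset.sum_comm]
  exact Finset.sum_congr rfl fun l _ => (coeff_pEval F (ψ l) m).symm

lemma ExpS_pEval {F : PowerSeries A} (hF : constantCoeff F = 0)
    {ψ : PowerSeries ℚ} (hψ : constantCoeff ψ = 0) :
    ExpS (pEval F ψ) = pEval F (ExpS ψ) := by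
  rw [ExpS, ExpS, pEval_pSum hF (isOrd_smul_pow hψ _)]
  apply pSum_congr
  intro k
  rw [pEval_smul, pEval_pow hF]

lemma constantCoeff_ExpS (ψ : PowerSeries A) : constantCoeff (ExpS ψ) = 1 := by
  rw [← coeff_zero_eq_constantCoeff, ExpS, coeff_pSum]
  simp

lemma fDeriv_neg (ψ : PowerSeries A) : fDeriv (-ψ) = -fDeriv ψ := by
  ext n
  simp [coeff_fDeriv]

lemma fDeriv_one : fDeriv (1 : PowerSeries A) = 0 := by
  ext n
  simp [coeff_fDeriv, coeff_one]

section Comm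

/-- Chain rule for the formal exponential, over commutative (rational)
coefficients. -/
lemma fDeriv_ExpS_comm {ψ : PowerSeries ℚ} (hψ : constantCoeff ψ = 0) :
    fDeriv (ExpS ψ) = fDeriv ψ * ExpS ψ := by
  rw [fDeriv_ExpS, ExpS, mul_pSum _ (isOrd_smul_pow hψ _)]
  apply pSum_congr
  intro k
  rw [fDeriv_pow_succ]
  have : ∀ i ∈ Finset.range (k + 1),
      ψ ^ i * fDeriv ψ * ψ ^ (k - i) = ψ ^ k * fDeriv ψ := by
    intro i hi
    rw [Finset.mem_range] at hi
    rw [mul_right_comm, ← pow_add]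
    congr 2
    omega
  rw [Finset.sum_congr rfl this, Finset.sum_const, Finset.card_range,
    ← Nat.cast_smul_eq_nsmul ℚ, smul_smul, mul_smul_comm, mul_comm (ψ ^ k)]
  congr 1
  rw [Nat.factorial_succ]
  have h1 : ((k + 1 : ℕ) : ℚ) ≠ 0 := by positivity
  have h2 : ((k.factorial : ℕ) : ℚ) ≠ 0 := by
    exact_mod_cast Nat.cast_ne_zero.2 k.factorial_ne_zero
  push_cast
  field_simp

lemma ExpS_mul_ExpS_neg {ψ : PowerSeries ℚ} (hψ : constantCoeff ψ = 0) :
    ExpS ψ * ExpS (-ψ) = 1 := by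
  set P := ExpS ψ * ExpS (-ψ) with hP
  have hψ' : constantCoeff (-ψ) = 0 := by rw [map_neg, hψ, neg_zero]
  have hder : fDeriv P = 0 := by
    rw [hP, fDeriv_mul, fDeriv_ExpS_comm hψ, fDeriv_ExpS_comm hψ', fDeriv_neg]
    ring
  have h0 : coeff 0 P = 1 := by
    rw [coeff_zero_eq_constantCoeff, hP, map_mul, constantCoeff_ExpS, constantCoeff_ExpS,
      one_mul]
  ext n
  cases n with
  | zero => rw [h0, coeff_zero_eq_constantCoeff, map_one]
  | succ n =>
    have := congrArg (coeff n) hder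
    rw [coeff_fDeriv, map_zero] at this
    have hn : ((n : ℚ) + 1) ≠ 0 := by positivity
    have : coeff (n + 1) P = 0 := by
      have := smul_eq_zero.1 this
      tauto
    rw [this, coeff_one, if_neg (by omega)]

/-- The logarithm series `log(1+X) = ∑ (-1)^{n+1} Xⁿ / n`. -/
noncomputable def lam : PowerSeries ℚ :=
  PowerSeries.mk fun n => (-1 : ℚ) ^ (n + 1) / n

lemma constantCoeff_lam : constantCoeff lam = 0 := by
  rw [← coeff_zero_eq_constantCoeff, lam, coeff_mk]
  simp

lemma fDeriv_lam : fDeriv lam = PowerSeries.mk fun n => (-1 : ℚ) ^ n := by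
  ext n
  rw [coeff_fDeriv, lam, coeff_mk, coeff_mk, smul_eq_mul]
  have hn : ((n : ℚ) + 1) ≠ 0 := by positivity
  field_simp
  push_cast
  ring

lemma one_add_X_mul_fDeriv_lam : (1 + X) * fDeriv lam = 1 := by
  rw [add_mul, one_mul, fDeriv_lam]
  ext n
  cases n with
  | zero =>
    have hx : coeff 0 (X * PowerSeries.mk fun n => (-1 : ℚ) ^ n) = 0 := by
      simp [coeff_zero_eq_constantCoeff]
    rw [map_add, coeff_mk, hx]
    simp
  | succ n =>
    rw [map_add, coeff_mk, coeff_succ_X_mul, coeff_mk, coeff_one, if_neg (by omega)]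
    ring

lemma ExpS_lam : ExpS lam = 1 + X := by
  set E := ExpS lam with hE
  have key : (1 + X) * fDeriv E = E := by
    rw [hE, fDeriv_ExpS_comm constantCoeff_lam, ← mul_assoc, one_add_X_mul_fDeriv_lam,
      one_mul]
  have e0 : coeff 0 E = 1 := by
    rw [coeff_zero_eq_constantCoeff]; exact constantCoeff_ExpS lam
  have rel : ∀ n : ℕ, ((n : ℚ) + 2) * coeff (n + 2) E
      + ((n : ℚ) + 1) * coeff (n + 1) E = coeff (n + 1) E := by
    intro n
    have h := congrArg (coeff (n + 1)) key
    rw [add_mul, one_mul, map_add, coeff_succ_X_mul, coeff_fDeriv, coeff_fDeriv] at h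
    push_cast at h
    rw [smul_eq_mul, smul_eq_mul] at h
    linarith [h]
  have e1 : coeff 1 E = 1 := by
    have h := congrArg (coeff 0) key
    have hx : coeff 0 (X * fDeriv E) = 0 := by
      simp [coeff_zero_eq_constantCoeff]
    rw [add_mul, one_mul, map_add, coeff_fDeriv, hx, add_zero, e0] at h
    push_cast at h
    rw [smul_eq_mul] at h
    linarith [h]
  have zero2 : ∀ n : ℕ, coeff (n + 2) E = 0 := by
    intro n
    induction n with
    | zero =>
      have h := rel 0
      push_cast at h
      nlinarith [h]
    | succ n ih =>
      have h := rel (n + 1)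
      push_cast at h
      rw [ih] at h
      have hn : ((n : ℚ) + 1 + 2) ≠ 0 := by positivity
      have : ((n : ℚ) + 1 + 2) * coeff (n + 1 + 2) E = 0 := by linarith
      exact (mul_eq_zero.1 this).resolve_left hn
  ext n
  match n with
  | 0 => rw [e0]; simp
  | 1 => rw [e1]; simp [coeff_one, coeff_X]
  | (n + 2) => rw [zero2 n]; simp [coeff_one, coeff_X]

end Comm

lemma neg_pow_apply {M : Type*} [AddCommGroup M] [Module ℚ M] (T : Module.End ℚ M)
    (q : ℕ) (x : M) : ((-T) ^ q) x = ((-1 : ℚ) ^ q) • ((T ^ q) x) := by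
  induction q generalizing x with
  | zero => simp
  | succ q ih =>
    have hL : ((-T) ^ (q + 1)) x = ((-T) ^ q) ((-T) x) := by
      rw [pow_succ, Module.End.mul_apply]
    have hR : (T ^ (q + 1)) x = (T ^ q) (T x) := by
      rw [pow_succ, Module.End.mul_apply]
    rw [hL, hR, LinearMap.neg_apply, map_neg, ih (T x), ← neg_smul]
    congr 1
    ring

lemma adPow_eq_end (Φ G : PowerSeries A) (n : ℕ) :
    adPow Φ G n = ((LinearMap.mulLeft ℚ Φ - LinearMap.mulRight ℚ Φ) ^ n) G := by
  induction n with
  | zero => simp [adPow]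
  | succ n ih =>
    show Φ * adPow Φ G n - adPow Φ G n * Φ = _
    rw [ih, pow_succ', Module.End.mul_apply, LinearMap.sub_apply,
      LinearMap.mulLeft_apply, LinearMap.mulRight_apply]

lemma adPow_eq (Φ G : PowerSeries A) (n : ℕ) :
    adPow Φ G n = ∑ p ∈ Finset.range (n + 1),
      ((-1 : ℚ) ^ (n - p) * (n.choose p : ℚ)) • (Φ ^ p * G * Φ ^ (n - p)) := by
  have hc : Commute (LinearMap.mulLeft ℚ Φ) (-(LinearMap.mulRight ℚ Φ)) :=
    (LinearMap.commute_mulLeft_right (R := ℚ) Φ Φ).neg_right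
  rw [adPow_eq_end, sub_eq_add_neg, hc.add_pow n, LinearMap.sum_apply]
  refine Finset.sum_congr rfl fun p hp => ?_
  rw [Module.End.mul_apply, Module.End.mul_apply, Module.End.natCast_apply,
    ← Nat.cast_smul_eq_nsmul ℚ (n.choose p) G, map_smul, neg_pow_apply,
    LinearMap.pow_mulRight, LinearMap.mulRight_apply, map_smul, map_smul,
    LinearMap.pow_mulLeft, LinearMap.mulLeft_apply, smul_smul]
  congr 1
  · ring
  · rw [mul_assoc]

lemma coeff_adPow_eq_zero {Φ : PowerSeries A} (hΦ : constantCoeff Φ = 0)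
    (G : PowerSeries A) {n m : ℕ} (hm : m < n) : coeff m (adPow Φ G n) = 0 := by
  rw [adPow_eq, map_sum]
  apply Finset.sum_eq_zero
  intro p hp
  rw [Finset.mem_range] at hp
  rw [coeff_smul, coeff_pow_mul_mul_pow_eq_zero hΦ (by omega), smul_zero]

lemma inv_fact_eq {n p : ℕ} (hp : p ≤ n) :
    ((p.factorial : ℚ))⁻¹ * (((n - p).factorial : ℚ))⁻¹
      = (n.choose p : ℚ) / (n.factorial : ℚ) := by
  have h := congrArg (Nat.cast : ℕ → ℚ) (Nat.choose_mul_factorial_mul_factorial hp)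
  push_cast at h
  have h1 : ((p.factorial : ℕ) : ℚ) ≠ 0 := Nat.cast_ne_zero.2 p.factorial_ne_zero
  have h2 : (((n - p).factorial : ℕ) : ℚ) ≠ 0 := Nat.cast_ne_zero.2 (n - p).factorial_ne_zero
  have h3 : ((n.factorial : ℕ) : ℚ) ≠ 0 := Nat.cast_ne_zero.2 n.factorial_ne_zero
  rw [eq_div_iff h3, ← h]
  field_simp

lemma alt_sum : ∀ {n p : ℕ}, p ≤ n →
    ∑ a ∈ Finset.range (p + 1),
        (-1 : ℚ) ^ a * (((a.factorial : ℚ))⁻¹ * ((((n - a) + 1).factorial : ℚ))⁻¹)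
      = (-1 : ℚ) ^ p * (n.choose p : ℚ) / (((n + 1).factorial : ℚ)) := by
  intro n p
  induction p with
  | zero =>
    intro _
    simp [Nat.factorial]
  | succ p ih =>
    intro hp
    rw [Finset.sum_range_succ, ih (by omega)]
    have e1 : (n - (p + 1)) + 1 = (n + 1) - (p + 1) := by omega
    rw [e1, inv_fact_eq (by omega : p + 1 ≤ n + 1)]
    have e2 : ((n + 1).choose (p + 1) : ℚ) = (n.choose p : ℚ) + (n.choose (p + 1) : ℚ) := by
      rw [← Nat.cast_add, Nat.choose_succ_succ]
    rw [e2]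
    have h3 : (((n + 1).factorial : ℕ) : ℚ) ≠ 0 := Nat.cast_ne_zero.2 (n + 1).factorial_ne_zero
    field_simp
    ring

lemma fLog_eq_pEval (F : PowerSeries A) : fLog F = pEval F lam := by
  ext m
  rw [fLog, coeff_mk, coeff_pEval]
  exact Finset.sum_congr rfl fun k _ => by rw [lam, coeff_mk]

/-- The derivative formula underlying the Magnus expansion. Let `σ(t)` be a
formal power series with constant term `1` and coefficients in a (possibly
noncommutative) ℚ-algebra, `τ = σ⁻¹`, `Φ = log σ`, and `ψ = σ⁻¹σ'`. Then
`ψ(t) = ∑_{n≥0} ((-1)ⁿ/(n+1)!) (ad Φ(t))ⁿ (Φ'(t))`, i.e.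
`ψ = {(1-e^{-Φ})/Φ , Φ'}` (the series converges coefficientwise since `Φ` has
zero constant term, `(ad Φ)ⁿ(Φ')` having no terms of degree `< n`). -/
theorem magnus_derivative_formula (σ τ : PowerSeries A)
    (hσ : constantCoeff σ = 1) (hτσ : τ * σ = 1) (hστ : σ * τ = 1) :
    letI Φ := fLog (σ - 1)
    τ * fDeriv σ =
      PowerSeries.mk (fun m =>
        ∑ n ∈ Finset.range (m + 1),
          ((-1 : ℚ) ^ n / (n + 1).factorial) • coeff m (adPow Φ (fDeriv Φ) n)) := by
  set F : PowerSeries A := σ - 1 with hFdef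
  set Φ : PowerSeries A := fLog F with hΦdef
  show τ * fDeriv σ = PowerSeries.mk (fun m =>
    ∑ n ∈ Finset.range (m + 1),
      ((-1 : ℚ) ^ n / (n + 1).factorial) • coeff m (adPow Φ (fDeriv Φ) n))
  have hF : constantCoeff F = 0 := by
    rw [hFdef, map_sub, hσ, map_one, sub_self]
  have hΦ : Φ = pEval F lam := by rw [hΦdef, fLog_eq_pEval]
  have hΦ0 : constantCoeff Φ = 0 := by
    rw [hΦ, ← coeff_zero_eq_constantCoeff, coeff_pEval]
    rw [Finset.range_one, Finset.sum_singleton]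
    have : coeff 0 lam = 0 := by
      rw [coeff_zero_eq_constantCoeff_apply]; exact constantCoeff_lam
    rw [this, zero_smul]
  have hnΦ0 : constantCoeff (-Φ) = 0 := by rw [map_neg, hΦ0, neg_zero]
  have hσE : σ = ExpS Φ := by
    rw [hΦ, ExpS_pEval hF constantCoeff_lam, ExpS_lam, pEval_add, pEval_one hF, pEval_X hF,
      hFdef, add_sub_cancel]
  have hτE : τ = ExpS (-Φ) := by
    have h1 : σ * ExpS (-Φ) = 1 := by
      have hneg : -Φ = pEval F (-lam) := by rw [pEval_neg, hΦ]
      have hc0 : constantCoeff (-lam) = 0 := by rw [map_neg, constantCoeff_lam, neg_zero]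
      rw [hneg, ExpS_pEval hF hc0, hσE, hΦ, ExpS_pEval hF constantCoeff_lam,
        ← pEval_mul hF, ExpS_mul_ExpS_neg constantCoeff_lam, pEval_one hF]
    calc τ = τ * (σ * ExpS (-Φ)) := by rw [h1, mul_one]
      _ = (τ * σ) * ExpS (-Φ) := by rw [mul_assoc]
      _ = ExpS (-Φ) := by rw [hτσ, one_mul]
  -- the two pSum factors
  have hfOrd : IsOrd (fun a : ℕ => ((a.factorial : ℚ))⁻¹ • (-Φ) ^ a) :=
    isOrd_smul_pow hnΦ0 _
  have hgOrd : IsOrd (fun k : ℕ => (((k + 1).factorial : ℚ))⁻¹ • fDeriv (Φ ^ (k + 1))) := by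
    intro k m hm
    rw [coeff_smul, coeff_fDeriv, coeff_pow_eq_zero hΦ0 (k + 1) (m + 1) (by omega),
      smul_zero, smul_zero]
  have hLHS : τ * fDeriv σ
      = pSum (fun n => ∑ p ∈ Finset.range (n + 1),
          (((p.factorial : ℚ))⁻¹ • (-Φ) ^ p)
            * ((((n - p + 1).factorial : ℚ))⁻¹ • fDeriv (Φ ^ (n - p + 1)))) := by
    rw [hτE, hσE, fDeriv_ExpS, ExpS, pSum_mul_pSum hfOrd hgOrd]
  rw [hLHS]
  -- the key finite computation
  have key : ∀ n : ℕ, (∑ p ∈ Finset.range (n + 1),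
      (((p.factorial : ℚ))⁻¹ • (-Φ) ^ p)
        * ((((n - p + 1).factorial : ℚ))⁻¹ • fDeriv (Φ ^ (n - p + 1))))
      = ((-1 : ℚ) ^ n / ((n + 1).factorial : ℚ)) • adPow Φ (fDeriv Φ) n := by
    intro n
    have step1 : ∀ a ∈ Finset.range (n + 1),
        (((a.factorial : ℚ))⁻¹ • (-Φ) ^ a)
          * ((((n - a + 1).factorial : ℚ))⁻¹ • fDeriv (Φ ^ (n - a + 1)))
        = ∑ i ∈ Finset.range (n + 1 - a),
            ((-1 : ℚ) ^ a * (((a.factorial : ℚ))⁻¹ * (((n - a + 1).factorial : ℚ))⁻¹))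
              • (Φ ^ (a + i) * fDeriv Φ * Φ ^ (n - a - i)) := by
      intro a ha
      rw [Finset.mem_range] at ha
      have hneg : (-Φ) ^ a = (-1 : ℚ) ^ a • Φ ^ a := by
        rw [← neg_one_smul ℚ Φ, smul_pow]
      rw [hneg, smul_smul, smul_mul_smul_comm, fDeriv_pow_succ, Finset.mul_sum,
        Finset.smul_sum]
      have hrange : n - a + 1 = n + 1 - a := by omega
      rw [hrange]
      refine Finset.sum_congr rfl fun i hi => ?_
      rw [Finset.mem_range] at hi
      congr 1
      · ring
      · rw [pow_add]
        simp [mul_assoc]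
    rw [Finset.sum_congr rfl step1,
      ← tri (fun a i => ((-1 : ℚ) ^ a * (((a.factorial : ℚ))⁻¹
          * (((n - a + 1).factorial : ℚ))⁻¹))
        • (Φ ^ (a + i) * fDeriv Φ * Φ ^ (n - a - i))) (n + 1)]
    have step2 : ∀ q ∈ Finset.range (n + 1),
        (∑ p ∈ Finset.range (q + 1),
          ((-1 : ℚ) ^ p * (((p.factorial : ℚ))⁻¹ * (((n - p + 1).factorial : ℚ))⁻¹))
            • (Φ ^ (p + (q - p)) * fDeriv Φ * Φ ^ (n - p - (q - p))))
        = ((-1 : ℚ) ^ q * ((n.choose q : ℕ) : ℚ) / (((n + 1).factorial : ℕ) : ℚ))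
            • (Φ ^ q * fDeriv Φ * Φ ^ (n - q)) := by
      intro q hq
      rw [Finset.mem_range] at hq
      have e : ∀ p ∈ Finset.range (q + 1),
          ((-1 : ℚ) ^ p * (((p.factorial : ℚ))⁻¹ * (((n - p + 1).factorial : ℚ))⁻¹))
            • (Φ ^ (p + (q - p)) * fDeriv Φ * Φ ^ (n - p - (q - p)))
          = ((-1 : ℚ) ^ p * (((p.factorial : ℚ))⁻¹ * ((((n - p) + 1).factorial : ℚ))⁻¹))
            • (Φ ^ q * fDeriv Φ * Φ ^ (n - q)) := by
        intro p hp
        rw [Finset.mem_range] at hp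
        have e1 : p + (q - p) = q := by omega
        have e2 : n - p - (q - p) = n - q := by omega
        rw [e1, e2]
      rw [Finset.sum_congr rfl e, ← Finset.sum_smul, alt_sum (by omega : q ≤ n)]
    rw [Finset.sum_congr rfl step2, adPow_eq, Finset.smul_sum]
    refine Finset.sum_congr rfl fun q hq => ?_
    rw [Finset.mem_range] at hq
    rw [smul_smul]
    congr 1
    have hpow : (-1 : ℚ) ^ (n - q) * (-1 : ℚ) ^ q = (-1 : ℚ) ^ n := by
      rw [← pow_add]
      congr 1
      omega
    have hu : (-1 : ℚ) ^ (n - q) * (-1 : ℚ) ^ (n - q) = 1 := by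
      rw [← pow_add]
      exact Even.neg_one_pow ⟨n - q, rfl⟩
    rw [← hpow]
    linear_combination (-(((n.choose q : ℕ) : ℚ) * (-1 : ℚ) ^ q
      / (((n + 1).factorial : ℕ) : ℚ))) * hu
  rw [pSum_congr key]
  ext m
  rw [coeff_pSum, coeff_mk]
  exact Finset.sum_congr rfl fun n _ => by rw [coeff_smul]
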